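/- Let n ≥ 1, p < 0, q = p/(p−1), a > 0, b, θ, r₀, r₁ ∈ ℝ, and ν₀, ν₁, ρ ∈ ℝ^n with q·(ρᵀρ) < 1. Set δ = 1/(1 − qρᵀρ), c = bθ − a²/2, Θ = (b + qaρᵀν₁)² + (a²/δ)(qν₁ᵀν₁ − 2p r₁) and Λ = (c − qaρᵀν₀)² + (a²/δ) q ν₀ᵀν₀, and assume Θ ≥ 0 and Λ ≥ 0. Define v₁ = (δ/a²)(b + qaρᵀν₁ − √Θ), v₀ = (δ/a²)(−(c − qaρᵀν₀) + √Λ), and λ = p r₀ − q ν₀ᵀν₁ + (a²/δ)v₀v₁ − v₀(b + qaρᵀν₁) + v₁(bθ − qaρᵀν₀). Then for every y > 0 the function v(y) = v₀ log y + v₁ y satisfies p(r₀ + r₁ y) − (q/(2y))(ν₀ + ν₁ y)ᵀ(ν₀ + ν₁ y) + (1/2)(v₀/y + v₁)²·(a² y/δ) + (v₀/y + v₁)·(b(θ − y) − qa(ρᵀν₀ + ρᵀν₁ y)) − (1/2)a² v₀/y = λ. -/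

import Mathlib

open Matrix

/-- Explicit candidate solution (4.13) in the Cox–Ingersoll–Ross model: with `v₀, v₁, λ`
given by the stated formulas, the function `v(y) = v₀ log y + v₁ y` satisfies the ergodic
HJB equation for every `y > 0` (all derivative expressions already substituted). -/
theorem cir_explicit_solution_solves_HJB {n : ℕ} (hn : 1 ≤ n)
    (p q : ℝ) (hp : p < 0) (hq : q = p / (p - 1))
    (a : ℝ) (ha : 0 < a) (b θ r0 r1 : ℝ) (ν0 ν1 ρ : Fin n → ℝ)
    (hqρ : q * (ρ ⬝ᵥ ρ) < 1)
    (δ c Θ Λ v1 v0 lam : ℝ)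
    (hδ : δ = 1 / (1 - q * (ρ ⬝ᵥ ρ)))
    (hc : c = b * θ - a ^ 2 / 2)
    (hΘ : Θ = (b + q * a * (ρ ⬝ᵥ ν1)) ^ 2 + (a ^ 2 / δ) * (q * (ν1 ⬝ᵥ ν1) - 2 * p * r1))
    (hΛ : Λ = (c - q * a * (ρ ⬝ᵥ ν0)) ^ 2 + (a ^ 2 / δ) * (q * (ν0 ⬝ᵥ ν0)))
    (hΘ0 : 0 ≤ Θ) (hΛ0 : 0 ≤ Λ)
    (hv1 : v1 = (δ / a ^ 2) * (b + q * a * (ρ ⬝ᵥ ν1) - Real.sqrt Θ))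
    (hv0 : v0 = (δ / a ^ 2) * (-(c - q * a * (ρ ⬝ᵥ ν0)) + Real.sqrt Λ))
    (hlam : lam = p * r0 - q * (ν0 ⬝ᵥ ν1) + (a ^ 2 / δ) * v0 * v1
        - v0 * (b + q * a * (ρ ⬝ᵥ ν1)) + v1 * (b * θ - q * a * (ρ ⬝ᵥ ν0))) :
    ∀ y : ℝ, 0 < y →
      p * (r0 + r1 * y)
        - (q / (2 * y)) * ((ν0 + y • ν1) ⬝ᵥ (ν0 + y • ν1))
        + (1 / 2) * (v0 / y + v1) ^ 2 * (a ^ 2 * y / δ)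
        + (v0 / y + v1) * (b * (θ - y) - q * a * ((ρ ⬝ᵥ ν0) + (ρ ⬝ᵥ ν1) * y))
        - (1 / 2) * a ^ 2 * v0 / y
      = lam := by
  intro y hy
  have hyne : y ≠ 0 := ne_of_gt hy
  have hane : a ≠ 0 := ne_of_gt ha
  have hδne : δ ≠ 0 := by
    rw [hδ]; exact one_div_ne_zero (by linarith)
  have hs : Real.sqrt Λ ^ 2 = Λ := Real.sq_sqrt hΛ0
  have ht : Real.sqrt Θ ^ 2 = Θ := Real.sq_sqrt hΘ0
  have hΛ' : δ * Λ = δ * (c - q * a * (ρ ⬝ᵥ ν0)) ^ 2 + a ^ 2 * (q * (ν0 ⬝ᵥ ν0)) := by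
    rw [hΛ]; field_simp
  have hΘ' : δ * Θ = δ * (b + q * a * (ρ ⬝ᵥ ν1)) ^ 2
      + a ^ 2 * (q * (ν1 ⬝ᵥ ν1) - 2 * p * r1) := by
    rw [hΘ]; field_simp
  have hv0' : a ^ 2 * v0 = δ * (Real.sqrt Λ - (c - q * a * (ρ ⬝ᵥ ν0))) := by
    rw [hv0]; field_simp; ring
  have hv1' : a ^ 2 * v1 = δ * ((b + q * a * (ρ ⬝ᵥ ν1)) - Real.sqrt Θ) := by
    rw [hv1]; field_simp
  have hA : (a ^ 2 * v0) ^ 2 + 2 * δ * (a ^ 2 * v0) * (c - q * a * (ρ ⬝ᵥ ν0))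
      = δ * a ^ 2 * (q * (ν0 ⬝ᵥ ν0)) := by
    linear_combination (a ^ 2 * v0 + δ * Real.sqrt Λ + δ * (c - q * a * (ρ ⬝ᵥ ν0))) * hv0'
      + δ ^ 2 * hs + δ * hΛ'
  have hB : (a ^ 2 * v1) ^ 2 - 2 * δ * (a ^ 2 * v1) * (b + q * a * (ρ ⬝ᵥ ν1))
      = δ * a ^ 2 * (q * (ν1 ⬝ᵥ ν1) - 2 * p * r1) := by
    linear_combination (a ^ 2 * v1 - δ * (b + q * a * (ρ ⬝ᵥ ν1)) - δ * Real.sqrt Θ) * hv1'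
      + δ ^ 2 * ht + δ * hΘ'
  have hlam' : δ * lam = δ * (p * r0 - q * (ν0 ⬝ᵥ ν1)) + a ^ 2 * v0 * v1
      - δ * v0 * (b + q * a * (ρ ⬝ᵥ ν1)) + δ * v1 * (b * θ - q * a * (ρ ⬝ᵥ ν0)) := by
    rw [hlam]; field_simp
  have hdot : (ν0 + y • ν1) ⬝ᵥ (ν0 + y • ν1)
      = (ν0 ⬝ᵥ ν0) + 2 * y * (ν0 ⬝ᵥ ν1) + y ^ 2 * (ν1 ⬝ᵥ ν1) := by
    simp [add_dotProduct, dotProduct_add, smul_dotProduct, dotProduct_smul,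
      dotProduct_comm ν1 ν0]
    ring
  rw [hdot]
  have hcc : c - q * a * (ρ ⬝ᵥ ν0) = b * θ - a ^ 2 / 2 - q * a * (ρ ⬝ᵥ ν0) := by rw [hc]
  rw [hcc] at hA
  have hA2 : a ^ 2 * v0 ^ 2 + 2 * δ * v0 * (b * θ - a ^ 2 / 2 - q * a * (ρ ⬝ᵥ ν0))
      - δ * (q * (ν0 ⬝ᵥ ν0)) = 0 := by
    refine mul_left_cancel₀ (pow_ne_zero 2 hane) ?_
    linear_combination hA
  have hB2 : a ^ 2 * v1 ^ 2 - 2 * δ * v1 * (b + q * a * (ρ ⬝ᵥ ν1))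
      - δ * (q * (ν1 ⬝ᵥ ν1) - 2 * p * r1) = 0 := by
    refine mul_left_cancel₀ (pow_ne_zero 2 hane) ?_
    linear_combination hB
  field_simp
  linear_combination hA2 + y ^ 2 * hB2 - (2 * y) * hlam'
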